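/- Let α and β be positive irrational real numbers with 1/α + 1/β = 1. Then the sets A = {⌊nα⌋ : n ≥ 1} and B = {⌊nβ⌋ : n ≥ 1} form a partition of the positive integers: A ∩ B = ∅ and A ∪ B = ℕ₊. -/

import Mathlib

open scoped symmDiff

theorem rayleigh_beatty (α β : ℝ) (hα : 0 < α) (hβ : 0 < β)
    (hirrα : Irrational α) (hirrβ : Irrational β)
    (hsum : 1/α + 1/β = 1) :
    Disjoint {k : ℤ | ∃ n : ℕ, 0 < n ∧ ⌊(n : ℝ) * α⌋ = k}
             {k : ℤ | ∃ n : ℕ, 0 < n ∧ ⌊(n : ℝ) * β⌋ = k} ∧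
    {k : ℤ | ∃ n : ℕ, 0 < n ∧ ⌊(n : ℝ) * α⌋ = k} ∪
      {k : ℤ | ∃ n : ℕ, 0 < n ∧ ⌊(n : ℝ) * β⌋ = k} = {k : ℤ | 0 < k} := by
  have hα1 : 1 < α := by
    by_contra h
    push_neg at h
    have h1 : 1 ≤ 1/α := by
      rw [le_div_iff₀ hα]; linarith
    have h2 : 0 < 1/β := by positivity
    linarith
  have hrs : α.HolderConjugate β := Real.holderConjugate_iff.mpr ⟨hα1, by
    simpa [one_div] using hsum⟩
  have hset : ∀ r : ℝ, 0 < r →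
      {k : ℤ | ∃ n : ℕ, 0 < n ∧ ⌊(n : ℝ) * r⌋ = k} = {beattySeq r k | k > 0} := by
    intro r hr
    ext j
    constructor
    · rintro ⟨n, hn, rfl⟩
      exact ⟨(n : ℤ), by exact_mod_cast hn, by simp [beattySeq]⟩
    · rintro ⟨k, hk, rfl⟩
      refine ⟨k.toNat, by omega, ?_⟩
      rw [beattySeq]
      congr 2
      exact_mod_cast congrArg Int.cast (Int.toNat_of_nonneg hk.le)
  have hsymm := Irrational.beattySeq_symmDiff_beattySeq_pos hrs hirrα
  rw [hset α hα, hset β hβ]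
  have hdisj : Disjoint {beattySeq α k | k > 0} {beattySeq β k | k > 0} := by
    rw [Set.disjoint_left]
    rintro j hjA hjB
    have hj : 0 < j := by
      obtain ⟨k, hk, rfl⟩ := hjA
      rw [beattySeq, Int.floor_pos]
      exact one_le_mul_of_one_le_of_one_le (by exact_mod_cast hk) hα1.le
    have : j ∈ {beattySeq α k | k > 0} ∆ {beattySeq β k | k > 0} := hsymm.symm ▸ hj
    rw [Set.mem_symmDiff] at this
    tauto
  refine ⟨hdisj, ?_⟩
  rw [← hsymm, Set.symmDiff_def]
  rw [Set.disjoint_left] at hdisj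
  ext j
  constructor
  · rintro (h | h)
    · exact Or.inl ⟨h, fun hb => hdisj h hb⟩
    · exact Or.inr ⟨h, fun ha => hdisj ha h⟩
  · rintro (h | h) <;> [left; right] <;> exact h.1
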